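/- arXiv:2312.16776 — 2 statements merged into one kernel-verified Lean document; each statement's English description precedes it below -/
import Mathlib

section
/- Suppose B and C are √gl_n-crystals. Then the set B ⊗ C = {b ⊗ c : b ∈ B, c ∈ C} of formal tensors is a √gl_n-crystal with weight map wt(b ⊗ c) = wt(b) + wt(c) and operators, for i ∈ [n−1]: e'_i(b ⊗ c) = b ⊗ e'_i(c) if ε'_i(b) ≤ φ'_i(c) and e'_i(b) ⊗ c if ε'_i(b) > φ'_i(c); f'_i(b ⊗ c) = b ⊗ f'_i(c) if ε'_i(b) < φ'_i(c) and f'_i(b) ⊗ c if ε'_i(b) ≥ φ'_i(c), with the convention b ⊗ 0 = 0 ⊗ c = 0. -/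
open scoped Classical

/-! ## Shifted diagrams, hook words, decomposition tableaux -/

/-- A strict partition, given as its (strictly decreasing) list of positive parts. -/
def IsStrictPartition (lam : List ℕ) : Prop :=
  lam.Chain' (· > ·) ∧ ∀ p ∈ lam, 0 < p

/-- A partition (weakly decreasing list of positive parts). -/
def IsPartition (lam : List ℕ) : Prop :=
  lam.Chain' (· ≥ ·) ∧ ∀ p ∈ lam, 0 < p

/-- `(i, j)` (1-indexed row `i`, column `j`) is a box of the shifted diagram `SD_lam`. -/
def InSD (lam : List ℕ) (i j : ℕ) : Prop :=
  1 ≤ i ∧ i ≤ lam.length ∧ i ≤ j ∧ j < i + lam.getD (i - 1) 0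

/-- `(i, j)` is a box of the (unshifted) Young diagram of `lam`. -/
def InYD (lam : List ℕ) (i j : ℕ) : Prop :=
  1 ≤ i ∧ i ≤ lam.length ∧ 1 ≤ j ∧ j ≤ lam.getD (i - 1) 0

/-- The word given by row `i` (1-indexed) of a shifted tableau `T`, read left to right. -/
def rowWord (lam : List ℕ) (T : ℕ × ℕ → ℕ) (i : ℕ) : List ℕ :=
  (List.range (lam.getD (i - 1) 0)).map fun j => T (i, i + j)

/-- A hook word: a sequence of positive integers `w₁ ≥ ⋯ ≥ w_m < w_{m+1} < ⋯ < w_n`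
for some `m ∈ [n]`. -/
def IsHookWord (w : List ℕ) : Prop :=
  (∀ v ∈ w, 0 < v) ∧
  ∃ m, 1 ≤ m ∧ m ≤ w.length ∧
    (∀ j : ℕ, j + 1 < m → w.getD (j + 1) 0 ≤ w.getD j 0) ∧
    (∀ j : ℕ, m ≤ j + 1 → j + 1 < w.length → w.getD j 0 < w.getD (j + 1) 0)

/-- `r` is a hook subword of maximal length in `s`. -/
def IsMaxHookSubwordIn (r s : List ℕ) : Prop :=
  r.Sublist s ∧ IsHookWord r ∧
    ∀ t : List ℕ, t.Sublist s → IsHookWord t → t.length ≤ r.length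

/-- A (semistandard) decomposition tableau of shifted shape `lam`. -/
def IsDecompTab (lam : List ℕ) (T : ℕ × ℕ → ℕ) : Prop :=
  (∀ i, 1 ≤ i → i ≤ lam.length → IsHookWord (rowWord lam T i)) ∧
  (∀ i, 1 ≤ i → i + 1 ≤ lam.length →
    IsMaxHookSubwordIn (rowWord lam T i) (rowWord lam T (i + 1) ++ rowWord lam T i))

/-! ## Set-valued decomposition tableaux -/

/-- A set-valued decomposition tableau: boxes of `SD_lam` are filled by finite nonempty
sets of positive integers, all of whose distributions are decomposition tableaux. -/
def IsSetDecompTab (lam : List ℕ) (T : ℕ × ℕ → Finset ℕ) : Prop :=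
  (∀ i j, InSD lam i j → (T (i, j)).Nonempty ∧ 0 ∉ T (i, j)) ∧
  (∀ d : ℕ × ℕ → ℕ, (∀ i j, InSD lam i j → d (i, j) ∈ T (i, j)) → IsDecompTab lam d)

/-- Set-valued decomposition tableau whose every entry is contained in `{1, …, n}`. -/
def IsSetDecompTabN (n : ℕ) (lam : List ℕ) (T : ℕ × ℕ → Finset ℕ) : Prop :=
  IsSetDecompTab lam T ∧ ∀ i j, InSD lam i j → ∀ v ∈ T (i, j), v ≤ n

/-! ## Reverse row reading words -/

/-- The boxes of `SD_lam` in reverse row reading order: the first row read right to left,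
then the second row right to left, and so on. -/
def revrowBoxes (lam : List ℕ) : List (ℕ × ℕ) :=
  (List.range lam.length).flatMap fun r =>
    (List.range (lam.getD r 0)).reverse.map fun j => (r + 1, r + 1 + j)

/-- Position of a box in the reverse row reading order. -/
def boxIdx (lam : List ℕ) (b : ℕ × ℕ) : ℕ := (revrowBoxes lam).idxOf b

/-- The reverse row reading word of a set-valued tableau, with each letter labelled by
its box: entries within each box are listed in decreasing order. -/
def revrowEntries (lam : List ℕ) (T : ℕ × ℕ → Finset ℕ) : List ((ℕ × ℕ) × ℕ) :=
  (revrowBoxes lam).flatMap fun b => (((T b).sort (· ≤ ·)).reverse).map fun v => (b, v)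

/-- The reverse row reading word of a set-valued tableau. -/
def revrowWord (lam : List ℕ) (T : ℕ × ℕ → Finset ℕ) : List ℕ :=
  (revrowEntries lam T).map Prod.snd

/-- `wtSet lam T k` is the number of boxes of `T` whose entry contains `k`. -/
noncomputable def wtSet (lam : List ℕ) (T : ℕ × ℕ → Finset ℕ) (k : ℕ) : ℕ :=
  ((revrowBoxes lam).filter fun b => decide (k ∈ T b)).length

/-- `wtNum lam T k` is the number of boxes of an ordinary tableau `T` equal to `k`. -/
noncomputable def wtNum (lam : List ℕ) (T : ℕ × ℕ → ℕ) (k : ℕ) : ℕ :=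
  ((revrowBoxes lam).filter fun b => decide (T b = k)).length

/-! ## Parenthesis pairing: `i`-unpaired letters -/

/-- Number of unmatched `i+1`'s ( "(" ) after scanning `u` left to right,
where each `i` ( ")" ) cancels the most recent unmatched `i+1`. -/
def openCount (i : ℕ) (u : List ℕ) : ℕ :=
  u.foldl (fun acc a => if a = i + 1 then acc + 1 else if a = i then acc - 1 else acc) 0

/-- Number of unmatched `i`'s ( ")" ) after scanning `u` right to left,
where each `i+1` ( "(" ) cancels the nearest unmatched `i` to its right. -/
def closeCount (i : ℕ) (u : List ℕ) : ℕ :=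
  u.foldr (fun a acc => if a = i then acc + 1 else if a = i + 1 then acc - 1 else acc) 0

/-- Position `p` of `w` holds an `i`-unpaired letter equal to `i+1`. -/
def UnpairedHigh (i : ℕ) (w : List ℕ) (p : ℕ) : Prop :=
  p < w.length ∧ w.getD p 0 = i + 1 ∧ closeCount i (w.drop (p + 1)) = 0

/-- Position `p` of `w` holds an `i`-unpaired letter equal to `i`. -/
def UnpairedLow (i : ℕ) (w : List ℕ) (p : ℕ) : Prop :=
  p < w.length ∧ w.getD p 0 = i ∧ openCount i (w.take p) = 0

instance (i : ℕ) (w : List ℕ) (p : ℕ) : Decidable (UnpairedHigh i w p) := by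
  unfold UnpairedHigh; infer_instance

instance (i : ℕ) (w : List ℕ) (p : ℕ) : Decidable (UnpairedLow i w p) := by
  unfold UnpairedLow; infer_instance

/-- The number of `i`-unpaired letters equal to `i+1` in `w`. -/
def numUnpairedHigh (i : ℕ) (w : List ℕ) : ℕ :=
  ((List.range w.length).filter fun p => decide (UnpairedHigh i w p)).length

/-- The number of `i`-unpaired letters equal to `i` in `w`. -/
def numUnpairedLow (i : ℕ) (w : List ℕ) : ℕ :=
  ((List.range w.length).filter fun p => decide (UnpairedLow i w p)).length

/-! ## Iterated partial operators and string lengths -/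

/-- Iterate a partial operator, with the convention that `0` (i.e. `none`) is absorbing. -/
def iterOpt {α : Type*} (g : α → Option α) : ℕ → α → Option α
  | 0, a => some a
  | k + 1, a => (g a).bind (iterOpt g k)

/-- `m` is the exact string length `sup {k | g^k a ≠ 0}` of `a` under `g`. -/
def HasStringLen {α : Type*} (g : α → Option α) (a : α) (m : ℕ) : Prop :=
  iterOpt g m a ≠ none ∧ iterOpt g (m + 1) a = none

/-! ## The queer crystal operators on set-valued decomposition tableaux -/

/-- The raising crystal operator `e_i` on set-valued decomposition tableaux. -/
noncomputable def eCrystal (lam : List ℕ) (i : ℕ) (T : ℕ × ℕ → Finset ℕ) :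
    Option (ℕ × ℕ → Finset ℕ) :=
  if h : ∃ p, UnpairedHigh i (revrowWord lam T) p then
    let xy := ((revrowEntries lam T).getD (Nat.find h) ((0, 0), 0)).1
    let T1 := Function.update T xy (insert i ((T xy).erase (i + 1)))
    if IsSetDecompTab lam T1 then some T1
    else if _hab : ∃ m, m < boxIdx lam xy ∧ i ∈ T ((revrowBoxes lam).getD m (0, 0)) ∧
        i + 1 ∈ T ((revrowBoxes lam).getD m (0, 0)) then
      let m := Nat.findGreatest (fun m => m < boxIdx lam xy ∧
          i ∈ T ((revrowBoxes lam).getD m (0, 0)) ∧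
          i + 1 ∈ T ((revrowBoxes lam).getD m (0, 0))) (boxIdx lam xy)
      let ab := (revrowBoxes lam).getD m (0, 0)
      some (Function.update (Function.update T ab ((T ab).erase (i + 1))) xy
        (insert i (T xy)))
    else none
  else none

/-- The lowering crystal operator `f_i` on set-valued decomposition tableaux. -/
noncomputable def fCrystal (lam : List ℕ) (i : ℕ) (T : ℕ × ℕ → Finset ℕ) :
    Option (ℕ × ℕ → Finset ℕ) :=
  if _h : ∃ p, UnpairedLow i (revrowWord lam T) p then
    let p := Nat.findGreatest (fun p => UnpairedLow i (revrowWord lam T) p)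
      (revrowWord lam T).length
    let xy := ((revrowEntries lam T).getD p ((0, 0), 0)).1
    let T1 := Function.update T xy (insert (i + 1) ((T xy).erase i))
    if IsSetDecompTab lam T1 then some T1
    else if hab : ∃ m, boxIdx lam xy < m ∧ m < (revrowBoxes lam).length ∧
        i ∈ T ((revrowBoxes lam).getD m (0, 0)) ∧
        i + 1 ∈ T ((revrowBoxes lam).getD m (0, 0)) then
      let ab := (revrowBoxes lam).getD (Nat.find hab) (0, 0)
      some (Function.update (Function.update T ab ((T ab).erase i)) xy
        (insert (i + 1) (T xy)))
    else none
  else none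

/-- The queer raising operator `e_1̄` on set-valued decomposition tableaux. -/
noncomputable def eBarCrystal (lam : List ℕ) (T : ℕ × ℕ → Finset ℕ) :
    Option (ℕ × ℕ → Finset ℕ) :=
  if h : ∃ p, p < (revrowWord lam T).length ∧ (revrowWord lam T).getD p 0 = 2 ∧
      ∀ q < p, (revrowWord lam T).getD q 0 ≠ 1 then
    let xy := ((revrowEntries lam T).getD (Nat.find h) ((0, 0), 0)).1
    if 1 ∈ T xy then none
    else some (Function.update T xy (insert 1 ((T xy).erase 2)))
  else none

/-- The queer lowering operator `f_1̄` on set-valued decomposition tableaux. -/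
noncomputable def fBarCrystal (lam : List ℕ) (T : ℕ × ℕ → Finset ℕ) :
    Option (ℕ × ℕ → Finset ℕ) :=
  if h : ∃ p, p < (revrowWord lam T).length ∧ (revrowWord lam T).getD p 0 = 1 ∧
      ∀ q < p, (revrowWord lam T).getD q 0 ≠ 2 then
    let xy := ((revrowEntries lam T).getD (Nat.find h) ((0, 0), 0)).1
    some (Function.update T xy (insert 2 ((T xy).erase 1)))
  else none
/-! ## Multiset-valued decomposition tableaux -/

/-- A multiset-valued decomposition tableau in which only the entry `1` may repeat
within a box, all of whose distributions are decomposition tableaux. -/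
def IsMultisetDecompTab (lam : List ℕ) (T : ℕ × ℕ → Multiset ℕ) : Prop :=
  (∀ i j, InSD lam i j → T (i, j) ≠ 0 ∧ 0 ∉ T (i, j) ∧
      ∀ v : ℕ, v ≠ 1 → (T (i, j)).count v ≤ 1) ∧
  (∀ d : ℕ × ℕ → ℕ, (∀ i j, InSD lam i j → d (i, j) ∈ T (i, j)) → IsDecompTab lam d)

/-- Reverse row reading word of a multiset-valued tableau, with boxes recorded. -/
def revrowEntriesM (lam : List ℕ) (T : ℕ × ℕ → Multiset ℕ) : List ((ℕ × ℕ) × ℕ) :=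
  (revrowBoxes lam).flatMap fun b => (((T b).sort (· ≤ ·)).reverse).map fun v => (b, v)

/-- Reverse row reading word of a multiset-valued tableau. -/
def revrowWordM (lam : List ℕ) (T : ℕ × ℕ → Multiset ℕ) : List ℕ :=
  (revrowEntriesM lam T).map Prod.snd

/-- The operator `e*_1̄` on multiset-valued decomposition tableaux: if the first `2` of
the reverse row reading word occurs before every `1`, change it to a `1`. -/
noncomputable def eStarBar (lam : List ℕ) (T : ℕ × ℕ → Multiset ℕ) :
    Option (ℕ × ℕ → Multiset ℕ) :=
  if h : ∃ p, p < (revrowWordM lam T).length ∧ (revrowWordM lam T).getD p 0 = 2 ∧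
      ∀ q < p, (revrowWordM lam T).getD q 0 ≠ 1 then
    let b := ((revrowEntriesM lam T).getD (Nat.find h) ((0, 0), 0)).1
    some (Function.update T b (1 ::ₘ (T b).erase 2))
  else none

/-- The operator `f*_1̄` on multiset-valued decomposition tableaux: if the first `1` of
the reverse row reading word occurs before every `2`, change it to a `2`. -/
noncomputable def fStarBar (lam : List ℕ) (T : ℕ × ℕ → Multiset ℕ) :
    Option (ℕ × ℕ → Multiset ℕ) :=
  if h : ∃ p, p < (revrowWordM lam T).length ∧ (revrowWordM lam T).getD p 0 = 1 ∧
      ∀ q < p, (revrowWordM lam T).getD q 0 ≠ 2 then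
    let b := ((revrowEntriesM lam T).getD (Nat.find h) ((0, 0), 0)).1
    some (Function.update T b (2 ::ₘ (T b).erase 1))
  else none

/-! ## Linked `i`-words and square-root crystal operators -/

/-- Characters of a linked `i`-word: `(`, `)` and `-`. -/
inductive PChar : Type
  | op : PChar
  | cl : PChar
  | dash : PChar
  deriving DecidableEq

/-- The linked `i`-word of a set-valued tableau, with each character labelled by its box:
a box containing `i` but not `i+1` gives `)`, a box containing `i+1` but not `i` gives `(`,
and a box containing both gives `)-(`; boxes are read in reverse row reading order. -/
def tokens (lam : List ℕ) (i : ℕ) (T : ℕ × ℕ → Finset ℕ) : List (PChar × (ℕ × ℕ)) :=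
  (revrowBoxes lam).flatMap fun b =>
    if i ∈ T b ∧ i + 1 ∈ T b then [(PChar.cl, b), (PChar.dash, b), (PChar.op, b)]
    else if i ∈ T b then [(PChar.cl, b)]
    else if i + 1 ∈ T b then [(PChar.op, b)]
    else []

/-- Unmatched `(`s after scanning left to right (ignoring dashes). -/
def openCnt (u : List PChar) : ℕ :=
  u.foldl (fun acc a => match a with
    | PChar.op => acc + 1
    | PChar.cl => acc - 1
    | PChar.dash => acc) 0

/-- Unmatched `)`s after scanning right to left (ignoring dashes). -/
def closeCnt (u : List PChar) : ℕ :=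
  u.foldr (fun a acc => match a with
    | PChar.cl => acc + 1
    | PChar.op => acc - 1
    | PChar.dash => acc) 0

/-- Position `p` holds an unpaired `(`. -/
def UnpairedOp (ws : List PChar) (p : ℕ) : Prop :=
  p < ws.length ∧ ws.getD p PChar.dash = PChar.op ∧ closeCnt (ws.drop (p + 1)) = 0

/-- Position `p` holds an unpaired `)`. -/
def UnpairedCl (ws : List PChar) (p : ℕ) : Prop :=
  p < ws.length ∧ ws.getD p PChar.dash = PChar.cl ∧ openCnt (ws.take p) = 0

/-- A fully matched (balanced) parenthesis word, ignoring dashes. -/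
def BalancedP (u : List PChar) : Prop :=
  u.count PChar.op = u.count PChar.cl ∧
  ∀ k, (u.take k).count PChar.cl ≤ (u.take k).count PChar.op

/-- The `(` at position `a` is matched with the `)` at position `b`. -/
def MatchedPair (ws : List PChar) (a b : ℕ) : Prop :=
  a < b ∧ b < ws.length ∧ ws.getD a PChar.dash = PChar.op ∧
  ws.getD b PChar.dash = PChar.cl ∧ BalancedP ((ws.drop (a + 1)).take (b - (a + 1)))

/-- Generating relation for equivalence classes of characters: a matched pair together
with everything between them lies in one class, and so do the three characters `)-(`
coming from a single box. -/
def LinkRel (ws : List PChar) (p q : ℕ) : Prop :=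
  (∃ a b, MatchedPair ws a b ∧ a ≤ p ∧ p ≤ b ∧ a ≤ q ∧ q ≤ b) ∨
  (∃ d, 1 ≤ d ∧ d + 1 < ws.length ∧ ws.getD d PChar.op = PChar.dash ∧
    (p = d - 1 ∨ p = d ∨ p = d + 1) ∧ (q = d - 1 ∨ q = d ∨ q = d + 1))

/-- Two positions lie in the same equivalence class of the linked `i`-word. -/
def SameClass (ws : List PChar) : ℕ → ℕ → Prop := Relation.ReflTransGen (LinkRel ws)

/-- The class of position `p` contains an unpaired `(`. -/
def HasUnpairedOpIn (ws : List PChar) (p : ℕ) : Prop :=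
  ∃ q, SameClass ws p q ∧ UnpairedOp ws q

/-- The class of position `p` contains an unpaired `)`. -/
def HasUnpairedClIn (ws : List PChar) (p : ℕ) : Prop :=
  ∃ q, SameClass ws p q ∧ UnpairedCl ws q

/-- Position `p` belongs to a left form: a class with no unpaired `)` that ends
with an unpaired `(`. -/
def IsLeftFormAt (ws : List PChar) (p : ℕ) : Prop :=
  p < ws.length ∧ HasUnpairedOpIn ws p ∧ ¬ HasUnpairedClIn ws p

/-- Position `p` belongs to a right form: a class with no unpaired `(` that starts
with an unpaired `)`. -/
def IsRightFormAt (ws : List PChar) (p : ℕ) : Prop :=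
  p < ws.length ∧ HasUnpairedClIn ws p ∧ ¬ HasUnpairedOpIn ws p

/-- The square-root raising operator `e'_i` on set-valued decomposition tableaux. -/
noncomputable def eSqrt (lam : List ℕ) (i : ℕ) (T : ℕ × ℕ → Finset ℕ) :
    Option (ℕ × ℕ → Finset ℕ) :=
  let tk := tokens lam i T
  let ws := tk.map Prod.fst
  if hc : ∃ p, UnpairedOp ws p ∧ HasUnpairedClIn ws p then
    -- the `)-(` at the end of the combined form: remove `i+1` from its box
    let b := (tk.getD (Nat.find hc) (PChar.op, (0, 0))).2
    some (Function.update T b ((T b).erase (i + 1)))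
  else if hl : ∃ p, IsLeftFormAt ws p then
    -- the `(` at the start of the first left form: add `i` to its box
    let b := (tk.getD (Nat.find hl) (PChar.op, (0, 0))).2
    some (Function.update T b (insert i (T b)))
  else none

/-- The square-root lowering operator `f'_i` on set-valued decomposition tableaux. -/
noncomputable def fSqrt (lam : List ℕ) (i : ℕ) (T : ℕ × ℕ → Finset ℕ) :
    Option (ℕ × ℕ → Finset ℕ) :=
  let tk := tokens lam i T
  let ws := tk.map Prod.fst
  if hc : ∃ p, UnpairedCl ws p ∧ HasUnpairedOpIn ws p then
    -- the `)-(` at the beginning of the combined form: remove `i` from its box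
    let b := (tk.getD (Nat.find hc) (PChar.op, (0, 0))).2
    some (Function.update T b ((T b).erase i))
  else if _hr : ∃ p, IsRightFormAt ws p then
    -- the `)` at the end of the last right form: add `i+1` to its box
    let b := (tk.getD (Nat.findGreatest (fun p => IsRightFormAt ws p) ws.length)
        (PChar.op, (0, 0))).2
    some (Function.update T b (insert (i + 1) (T b)))
  else none

/-- The square-root queer raising operator `e'_1̄`. -/
noncomputable def eBarSqrt (lam : List ℕ) (T : ℕ × ℕ → Finset ℕ) :
    Option (ℕ × ℕ → Finset ℕ) :=
  if h : ∃ m, m < (revrowBoxes lam).length ∧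
      (1 ∈ T ((revrowBoxes lam).getD m (0, 0)) ∨ 2 ∈ T ((revrowBoxes lam).getD m (0, 0))) then
    let b := (revrowBoxes lam).getD (Nat.find h) (0, 0)
    if 1 ∈ T b then
      if 2 ∈ T b then some (Function.update T b ((T b).erase 2)) else none
    else some (Function.update T b (insert 1 (T b)))
  else none

/-- The square-root queer lowering operator `f'_1̄`. -/
noncomputable def fBarSqrt (lam : List ℕ) (T : ℕ × ℕ → Finset ℕ) :
    Option (ℕ × ℕ → Finset ℕ) :=
  if h : ∃ m, m < (revrowBoxes lam).length ∧
      (1 ∈ T ((revrowBoxes lam).getD m (0, 0)) ∨ 2 ∈ T ((revrowBoxes lam).getD m (0, 0))) then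
    let b := (revrowBoxes lam).getD (Nat.find h) (0, 0)
    if 2 ∈ T b then
      if 1 ∈ T b then some (Function.update T b ((T b).erase 1)) else none
    else some (Function.update T b (insert 2 (T b)))
  else none
/-! ## Abstract √gl_n- and √q_n-crystals -/

/-- The data of a crystal-like structure: a weight map (coordinates `1, …, n` are the
relevant ones) and partial raising/lowering operators indexed by `i ∈ [n-1]`. -/
structure SqGlData (B : Type*) where
  wt : B → ℕ → ℕ
  e : ℕ → B → Option B
  f : ℕ → B → Option B

/-- The axioms of a `√gl_n`-crystal. -/
def IsSqGlCrystal {B : Type*} (n : ℕ) (D : SqGlData B) : Prop :=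
  (∀ i, 1 ≤ i → i < n → ∀ b, ∃ ep ph : ℕ,
      HasStringLen (D.e i) b ep ∧ HasStringLen (D.f i) b ph ∧
      Even (ep + ph) ∧ (ph : ℤ) - ep = 2 * ((D.wt b i : ℤ) - D.wt b (i + 1))) ∧
  (∀ i, 1 ≤ i → i < n → ∀ b c, D.e i b = some c ↔ D.f i c = some b) ∧
  (∀ i, 1 ≤ i → i < n → ∀ b c, D.e i b = some c → ∀ ep, HasStringLen (D.e i) b ep →
      ∀ k, (D.wt c k : ℤ) - D.wt b k =
        if Even ep then (if k = i then 1 else 0) else (if k = i + 1 then -1 else 0))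

/-- The data of a queer crystal-like structure. -/
structure SqQData (B : Type*) extends SqGlData B where
  ebar : B → Option B
  fbar : B → Option B

/-- The axioms of a `√q_n`-crystal. -/
def IsSqQnCrystal {B : Type*} (n : ℕ) (D : SqQData B) : Prop :=
  IsSqGlCrystal n D.toSqGlData ∧
  (∀ i, 3 ≤ i → i < n → ∀ b,
      (D.e i b).bind D.ebar = (D.ebar b).bind (D.e i) ∧
      (D.f i b).bind D.ebar = (D.ebar b).bind (D.f i) ∧
      (D.e i b).bind D.fbar = (D.fbar b).bind (D.e i) ∧
      (D.f i b).bind D.fbar = (D.fbar b).bind (D.f i)) ∧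
  (∀ i, 3 ≤ i → i < n → ∀ b c, (D.ebar b = some c ∨ D.fbar b = some c) →
      (∀ m, HasStringLen (D.e i) b m ↔ HasStringLen (D.e i) c m) ∧
      (∀ m, HasStringLen (D.f i) b m ↔ HasStringLen (D.f i) c m)) ∧
  (∀ b, ∃ ep ph : ℕ, HasStringLen D.ebar b ep ∧ HasStringLen D.fbar b ph ∧
      ep + ph = (if D.wt b 1 = 0 ∧ D.wt b 2 = 0 then 0 else 2)) ∧
  (∀ b c, D.ebar b = some c ↔ D.fbar c = some b) ∧
  (∀ b c, D.ebar b = some c → ∀ ep, HasStringLen D.ebar b ep →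
      ∀ k, (D.wt c k : ℤ) - D.wt b k =
        if ep = 2 then (if k = 1 then 1 else 0) else (if k = 2 then -1 else 0))

/-- The square of a partial operator. -/
def sqOp {B : Type*} (g : B → Option B) : B → Option B := fun b => (g b).bind g

/-- The axioms of a (seminormal) `gl_n`-crystal for given weight map and operators. -/
def GlSeminormalAxioms {B : Type*} (n : ℕ) (wt : B → ℕ → ℕ)
    (E F : ℕ → B → Option B) : Prop :=
  (∀ i, 1 ≤ i → i < n → ∀ b c, E i b = some c ↔ F i c = some b) ∧
  (∀ i, 1 ≤ i → i < n → ∀ b c, E i b = some c →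
      ∀ k, (wt c k : ℤ) - wt b k = (if k = i then 1 else 0) - (if k = i + 1 then 1 else 0)) ∧
  (∀ i, 1 ≤ i → i < n → ∀ b, ∃ ep ph : ℕ,
      HasStringLen (E i) b ep ∧ HasStringLen (F i) b ph ∧
      (ph : ℤ) - ep = (wt b i : ℤ) - wt b (i + 1))

/-- The additional axioms making a `gl_n`-crystal into a `q_n`-crystal. -/
def QnExtraAxioms {B : Type*} (n : ℕ) (wt : B → ℕ → ℕ)
    (E F : ℕ → B → Option B) (Eb Fb : B → Option B) : Prop :=
  (∀ i, 3 ≤ i → i < n → ∀ b,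
      (E i b).bind Eb = (Eb b).bind (E i) ∧ (F i b).bind Eb = (Eb b).bind (F i) ∧
      (E i b).bind Fb = (Fb b).bind (E i) ∧ (F i b).bind Fb = (Fb b).bind (F i)) ∧
  (∀ i, 3 ≤ i → i < n → ∀ b c, (Eb b = some c ∨ Fb b = some c) →
      (∀ m, HasStringLen (E i) b m ↔ HasStringLen (E i) c m) ∧
      (∀ m, HasStringLen (F i) b m ↔ HasStringLen (F i) c m)) ∧
  (∀ b c, Eb b = some c ↔ Fb c = some b) ∧
  (∀ b c, Eb b = some c →
      ∀ k, (wt c k : ℤ) - wt b k = (if k = 1 then 1 else 0) - (if k = 2 then 1 else 0))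

/-- String length as a function (the supremum of the set of iterates that survive). -/
noncomputable def strLen {B : Type*} (g : B → Option B) (b : B) : ℕ :=
  sSup {k | iterOpt g k b ≠ none}

/-- Tensor product of `√gl_n`-crystal data. -/
noncomputable def tensorGl {B C : Type*} (DB : SqGlData B) (DC : SqGlData C) :
    SqGlData (B × C) where
  wt := fun bc k => DB.wt bc.1 k + DC.wt bc.2 k
  e := fun i bc =>
    if strLen (DB.e i) bc.1 ≤ strLen (DC.f i) bc.2 then
      (DC.e i bc.2).map fun c' => (bc.1, c')
    else (DB.e i bc.1).map fun b' => (b', bc.2)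
  f := fun i bc =>
    if strLen (DB.e i) bc.1 < strLen (DC.f i) bc.2 then
      (DC.f i bc.2).map fun c' => (bc.1, c')
    else (DB.f i bc.1).map fun b' => (b', bc.2)

/-- Tensor product of `√q_n`-crystal data. -/
noncomputable def tensorQ {B C : Type*} (DB : SqQData B) (DC : SqQData C) :
    SqQData (B × C) where
  toSqGlData := tensorGl DB.toSqGlData DC.toSqGlData
  ebar := fun bc =>
    if DB.wt bc.1 1 = 0 ∧ DB.wt bc.1 2 = 0 then (DC.ebar bc.2).map fun c' => (bc.1, c')
    else (DB.ebar bc.1).map fun b' => (b', bc.2)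
  fbar := fun bc =>
    if DB.wt bc.1 1 = 0 ∧ DB.wt bc.1 2 = 0 then (DC.fbar bc.2).map fun c' => (bc.1, c')
    else (DB.fbar bc.1).map fun b' => (b', bc.2)
/-! ## Generating functions -/

/-- A set-valued decomposition tableau, normalized to be empty off the shifted diagram. -/
def IsNormalizedSVDT (lam : List ℕ) (T : ℕ × ℕ → Finset ℕ) : Prop :=
  IsSetDecompTab lam T ∧ ∀ i j, ¬ InSD lam i j → T (i, j) = ∅

/-- A decomposition tableau, normalized to be `0` off the shifted diagram. -/
def IsNormalizedDT (lam : List ℕ) (T : ℕ × ℕ → ℕ) : Prop :=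
  IsDecompTab lam T ∧ ∀ i j, ¬ InSD lam i j → T (i, j) = 0

/-- `Σ_λ = ∑_{T ∈ SetDecTab(λ)} x^T` as a formal power series; variable `k` stands for
`x_{k+1}`, i.e. records occurrences of the letter `k+1`. -/
noncomputable def SigmaLam (lam : List ℕ) : MvPowerSeries ℕ ℤ :=
  fun d => (Set.ncard
    {T : ℕ × ℕ → Finset ℕ | IsNormalizedSVDT lam T ∧ ∀ k, wtSet lam T (k + 1) = d k} : ℤ)

/-- The Schur `P`-function `P_λ = ∑_{T ∈ DecTab(λ)} x^T` as a formal power series. -/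
noncomputable def SchurPfun (lam : List ℕ) : MvPowerSeries ℕ ℤ :=
  fun d => (Set.ncard
    {T : ℕ × ℕ → ℕ | IsNormalizedDT lam T ∧ ∀ k, wtNum lam T (k + 1) = d k} : ℤ)

/-! ## Marked (primed) shifted tableaux and `GP`-functions.
We encode the marked alphabet `1' < 1 < 2' < 2 < ⋯` into `ℕ` by `k' ↦ 2k - 1` and
`k ↦ 2k`, so primed letters are odd and the natural order is preserved. -/

/-- A semistandard marked shifted tableau (as a distribution): weakly increasing rows and
columns, no primed (odd) letter repeated in a row, no unprimed (even) letter repeated in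
a column. -/
def IsSemistandardMarked (lam : List ℕ) (d : ℕ × ℕ → ℕ) : Prop :=
  (∀ i j, InSD lam i j → InSD lam i (j + 1) → d (i, j) ≤ d (i, j + 1)) ∧
  (∀ i j, InSD lam i j → InSD lam (i + 1) j → d (i, j) ≤ d (i + 1, j)) ∧
  (∀ i j j', InSD lam i j → InSD lam i j' → j < j' → d (i, j) = d (i, j') →
    Even (d (i, j))) ∧
  (∀ i i' j, InSD lam i j → InSD lam i' j → i < i' → d (i, j) = d (i', j) →
    Odd (d (i, j)))

/-- A semistandard set-valued shifted tableau in the marked alphabet, with no primed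
letters on the main diagonal. -/
def IsSetSSMarkedShifted (lam : List ℕ) (T : ℕ × ℕ → Finset ℕ) : Prop :=
  (∀ i j, InSD lam i j → (T (i, j)).Nonempty ∧ ∀ v ∈ T (i, j), 1 ≤ v) ∧
  (∀ i, InSD lam i i → ∀ v ∈ T (i, i), Even v) ∧
  (∀ d : ℕ × ℕ → ℕ, (∀ i j, InSD lam i j → d (i, j) ∈ T (i, j)) →
    IsSemistandardMarked lam d)

/-- `wtMarked lam T k` is the total number of occurrences of `k` or `k'` in `T`. -/
noncomputable def wtMarked (lam : List ℕ) (T : ℕ × ℕ → Finset ℕ) (k : ℕ) : ℕ :=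
  ((revrowBoxes lam).map fun b =>
    ((T b).filter fun v => v = 2 * k - 1 ∨ v = 2 * k).card).sum

/-- The K-theoretic Schur `P`-function `GP_λ` as a formal power series; variable `k`
stands for `x_{k+1}`. -/
noncomputable def GPfun (lam : List ℕ) : MvPowerSeries ℕ ℤ :=
  fun d => (Set.ncard
    {T : ℕ × ℕ → Finset ℕ | IsSetSSMarkedShifted lam T ∧
      (∀ i j, ¬ InSD lam i j → T (i, j) = ∅) ∧
      ∀ k, wtMarked lam T (k + 1) = d k} : ℤ)

/-! ## Polynomial versions (variables `x_1, …, x_n`, i.e. `X 1, …, X n`) -/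

/-- The boxes of the (unshifted) Young diagram of `lam`, listed row by row. -/
def YDboxes (lam : List ℕ) : List (ℕ × ℕ) :=
  (List.range lam.length).flatMap fun r =>
    (List.range (lam.getD r 0)).map fun j => (r + 1, j + 1)

/-- A semistandard (unshifted) Young tableau: rows weakly increase, columns strictly
increase. -/
def IsSemistandardYT (lam : List ℕ) (d : ℕ × ℕ → ℕ) : Prop :=
  (∀ i j, InYD lam i j → InYD lam i (j + 1) → d (i, j) ≤ d (i, j + 1)) ∧
  (∀ i j, InYD lam i j → InYD lam (i + 1) j → d (i, j) < d (i + 1, j))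

/-- A semistandard set-valued (unshifted) tableau with entries in `{1, …, n}`,
normalized off the diagram. -/
def IsSetSSYT (n : ℕ) (lam : List ℕ) (T : ℕ × ℕ → Finset ℕ) : Prop :=
  (∀ i j, InYD lam i j → (T (i, j)).Nonempty ∧ ∀ v ∈ T (i, j), 1 ≤ v ∧ v ≤ n) ∧
  (∀ i j, ¬ InYD lam i j → T (i, j) = ∅) ∧
  (∀ d : ℕ × ℕ → ℕ, (∀ i j, InYD lam i j → d (i, j) ∈ T (i, j)) → IsSemistandardYT lam d)

/-- The symmetric Grothendieck polynomial `G_λ(x_1, …, x_n)`. -/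
noncomputable def Gpoly (n : ℕ) (lam : List ℕ) : MvPolynomial ℕ ℤ :=
  ∑ᶠ T ∈ {T : ℕ × ℕ → Finset ℕ | IsSetSSYT n lam T},
    ((YDboxes lam).map fun b =>
      ∏ v ∈ T b, (MvPolynomial.X v : MvPolynomial ℕ ℤ)).prod

/-- A semistandard set-valued marked shifted tableau with letters at most `n`,
normalized off the diagram. -/
def IsSetSSMarkedShiftedN (n : ℕ) (lam : List ℕ) (T : ℕ × ℕ → Finset ℕ) : Prop :=
  IsSetSSMarkedShifted lam T ∧ (∀ i j, ¬ InSD lam i j → T (i, j) = ∅) ∧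
  ∀ i j, InSD lam i j → ∀ v ∈ T (i, j), v ≤ 2 * n

/-- The K-theoretic Schur `P`-polynomial `GP_λ(x_1, …, x_n)`. -/
noncomputable def GPpoly (n : ℕ) (lam : List ℕ) : MvPolynomial ℕ ℤ :=
  ∑ᶠ T ∈ {T : ℕ × ℕ → Finset ℕ | IsSetSSMarkedShiftedN n lam T},
    ((revrowBoxes lam).map fun b =>
      ∏ v ∈ T b, (MvPolynomial.X ((v + 1) / 2) : MvPolynomial ℕ ℤ)).prod

/-- The character of the `m`-th tensor power of the standard `√q_n`-crystal, whose
elements are the nonempty subsets of `{1, …, n}` with weight the indicator vector. -/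
noncomputable def standardChar (n m : ℕ) : MvPolynomial ℕ ℤ :=
  ∑ b : Fin m → {S : Finset (Fin n) // S.Nonempty},
    ∏ j : Fin m, ∏ k ∈ (b j).1, (MvPolynomial.X ((k : ℕ) + 1) : MvPolynomial ℕ ℤ)

/-! ### Auxiliary lemmas for Statement 16 -/

section Stmt16Aux

variable {α : Type*}

lemma iterOpt_succ_right (g : α → Option α) (k : ℕ) (a : α) :
    iterOpt g (k + 1) a = (iterOpt g k a).bind g := by
  induction k generalizing a with
  | zero => cases h : g a <;> simp [iterOpt, h]
  | succ k ih =>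
    show (g a).bind (iterOpt g (k + 1)) = _
    cases h : g a with
    | none => simp [iterOpt, h]
    | some a' =>
      simp only [Option.bind_some, ih a']
      simp [iterOpt, h]

lemma iterOpt_none_mono {g : α → Option α} {k : ℕ} {a : α} (h : iterOpt g k a = none) :
    ∀ j, k ≤ j → iterOpt g j a = none := by
  intro j hj
  obtain ⟨m, rfl⟩ := Nat.exists_eq_add_of_le hj
  induction m with
  | zero => exact h
  | succ m ih => rw [← Nat.add_assoc, iterOpt_succ_right, ih (by omega)]; rfl

lemma hasStringLen_gt_none {g : α → Option α} {a : α} {m : ℕ}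
    (h : HasStringLen g a m) : ∀ j, m < j → iterOpt g j a = none := by
  intro j hj
  exact iterOpt_none_mono h.2 j hj

lemma hasStringLen_unique {g : α → Option α} {a : α} {m m' : ℕ}
    (h : HasStringLen g a m) (h' : HasStringLen g a m') : m = m' := by
  rcases lt_trichotomy m m' with hl | he | hl
  · exact absurd (hasStringLen_gt_none h m' hl) h'.1
  · exact he
  · exact absurd (hasStringLen_gt_none h' m hl) h.1

lemma strLen_eq {g : α → Option α} {a : α} {m : ℕ} (h : HasStringLen g a m) :
    strLen g a = m := by
  have hg : IsGreatest {k | iterOpt g k a ≠ none} m := by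
    constructor
    · exact h.1
    · intro k hk
      by_contra hkm
      exact hk (hasStringLen_gt_none h k (by omega))
  exact hg.csSup_eq

lemma hsl_shift {g : α → Option α} {a a' : α} (hga : g a = some a') (m : ℕ) :
    HasStringLen g a (m + 1) ↔ HasStringLen g a' m := by
  have key : ∀ k, iterOpt g (k + 1) a = iterOpt g k a' := by
    intro k; show (g a).bind _ = _; rw [hga]; rfl
  unfold HasStringLen
  rw [key m, key (m + 1)]

lemma hsl_zero {g : α → Option α} {a : α} :
    HasStringLen g a 0 ↔ g a = none := by
  unfold HasStringLen
  cases h : g a <;> simp [iterOpt, h]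

lemma hsl_succ_exists {g : α → Option α} {a : α} {m : ℕ}
    (h : HasStringLen g a (m + 1)) : ∃ a', g a = some a' ∧ HasStringLen g a' m := by
  cases hga : g a with
  | none =>
    exfalso
    have h1 : iterOpt g 1 a = none := by
      show (g a).bind _ = none; rw [hga]; rfl
    exact h.1 (iterOpt_none_mono h1 (m + 1) (by omega))
  | some a' => exact ⟨a', rfl, (hsl_shift hga m).mp h⟩

lemma hsl_pos_exists {g : α → Option α} {a a' : α} {m : ℕ}
    (h : HasStringLen g a m) (hga : g a = some a') :
    ∃ m', m = m' + 1 ∧ HasStringLen g a' m' := by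
  cases m with
  | zero => rw [hsl_zero.mp h] at hga; exact absurd hga (by simp)
  | succ m' => exact ⟨m', rfl, (hsl_shift hga m').mp h⟩

variable {B C : Type*} (DB : SqGlData B) (DC : SqGlData C)

lemma tensorGl_e (i : ℕ) (b : B) (c : C) :
    (tensorGl DB DC).e i (b, c) =
      if strLen (DB.e i) b ≤ strLen (DC.f i) c then
        (DC.e i c).map fun c' => (b, c')
      else (DB.e i b).map fun b' => (b', c) := rfl

lemma tensorGl_f (i : ℕ) (b : B) (c : C) :
    (tensorGl DB DC).f i (b, c) =
      if strLen (DB.e i) b < strLen (DC.f i) c then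
        (DC.f i c).map fun c' => (b, c')
      else (DB.f i b).map fun b' => (b', c) := rfl

lemma tensE (i : ℕ) (hC2 : ∀ x y, DC.e i x = some y ↔ DC.f i y = some x) :
    ∀ N a d q (b : B) (c : C), a + d ≤ N →
      HasStringLen (DB.e i) b a → HasStringLen (DC.e i) c d →
      HasStringLen (DC.f i) c q →
      HasStringLen ((tensorGl DB DC).e i) (b, c) (a - min a q + d) := by
  intro N
  induction N with
  | zero =>
    intro a d q b c hN ha hd hq
    obtain rfl : a = 0 := by omega
    obtain rfl : d = 0 := by omega
    have hmin : (0 : ℕ) - min 0 q + 0 = 0 := by omega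
    rw [hmin, hsl_zero, tensorGl_e, if_pos (by rw [strLen_eq ha, strLen_eq hq]; omega),
      hsl_zero.mp hd]
    rfl
  | succ N ih =>
    intro a d q b c hN ha hd hq
    by_cases haq : a ≤ q
    · cases d with
      | zero =>
        have hmin : a - min a q + 0 = 0 := by omega
        rw [hmin, hsl_zero, tensorGl_e, if_pos (by rw [strLen_eq ha, strLen_eq hq]; omega),
          hsl_zero.mp hd]
        rfl
      | succ d' =>
        obtain ⟨c', hc', hd'⟩ := hsl_succ_exists hd
        have hq' : HasStringLen (DC.f i) c' (q + 1) :=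
          (hsl_shift ((hC2 _ _).mp hc') q).mpr hq
        have hrec := ih a d' (q + 1) b c' (by omega) ha hd' hq'
        have hstep : (tensorGl DB DC).e i (b, c) = some (b, c') := by
          rw [tensorGl_e, if_pos (by rw [strLen_eq ha, strLen_eq hq]; omega), hc']
          rfl
        have heq : a - min a q + (d' + 1) = (a - min a (q + 1) + d') + 1 := by omega
        rw [heq]
        exact (hsl_shift hstep _).mpr hrec
    · cases a with
      | zero => omega
      | succ a' =>
        obtain ⟨b', hb', ha'⟩ := hsl_succ_exists ha
        have hrec := ih a' d q b' c (by omega) ha' hd hq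
        have hstep : (tensorGl DB DC).e i (b, c) = some (b', c) := by
          rw [tensorGl_e, if_neg (by rw [strLen_eq ha, strLen_eq hq]; omega), hb']
          rfl
        have heq : a' + 1 - min (a' + 1) q + d = (a' - min a' q + d) + 1 := by omega
        rw [heq]
        exact (hsl_shift hstep _).mpr hrec

lemma tensF (i : ℕ) (hB2 : ∀ x y, DB.e i x = some y ↔ DB.f i y = some x) :
    ∀ N a p q (b : B) (c : C), p + q ≤ N →
      HasStringLen (DB.e i) b a → HasStringLen (DB.f i) b p →
      HasStringLen (DC.f i) c q →
      HasStringLen ((tensorGl DB DC).f i) (b, c) (q - min a q + p) := by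
  intro N
  induction N with
  | zero =>
    intro a p q b c hN ha hp hq
    obtain rfl : p = 0 := by omega
    obtain rfl : q = 0 := by omega
    have hmin : (0 : ℕ) - min a 0 + 0 = 0 := by omega
    rw [hmin, hsl_zero, tensorGl_f, if_neg (by rw [strLen_eq ha, strLen_eq hq]; omega),
      hsl_zero.mp hp]
    rfl
  | succ N ih =>
    intro a p q b c hN ha hp hq
    by_cases haq : a < q
    · cases q with
      | zero => omega
      | succ q' =>
        obtain ⟨c', hc', hq'⟩ := hsl_succ_exists hq
        have hrec := ih a p q' b c' (by omega) ha hp hq'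
        have hstep : (tensorGl DB DC).f i (b, c) = some (b, c') := by
          rw [tensorGl_f, if_pos (by rw [strLen_eq ha, strLen_eq hq]; omega), hc']
          rfl
        have heq : q' + 1 - min a (q' + 1) + p = (q' - min a q' + p) + 1 := by omega
        rw [heq]
        exact (hsl_shift hstep _).mpr hrec
    · cases p with
      | zero =>
        have hmin : q - min a q + 0 = 0 := by omega
        rw [hmin, hsl_zero, tensorGl_f, if_neg (by rw [strLen_eq ha, strLen_eq hq]; omega),
          hsl_zero.mp hp]
        rfl
      | succ p' =>
        obtain ⟨b', hb', hp'⟩ := hsl_succ_exists hp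
        have ha' : HasStringLen (DB.e i) b' (a + 1) :=
          (hsl_shift ((hB2 _ _).mpr hb') a).mpr ha
        have hrec := ih (a + 1) p' q b' c (by omega) ha' hp' hq
        have hstep : (tensorGl DB DC).f i (b, c) = some (b', c) := by
          rw [tensorGl_f, if_neg (by rw [strLen_eq ha, strLen_eq hq]; omega), hb']
          rfl
        have heq : q - min a q + (p' + 1) = (q - min (a + 1) q + p') + 1 := by omega
        rw [heq]
        exact (hsl_shift hstep _).mpr hrec

end Stmt16Aux

/-- Theorem 3.14 of the paper, `√gl_n` part: the tensor product of
two `√gl_n`-crystals, with `wt(b ⊗ c) = wt(b) + wt(c)` and the operators defined by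
the string-length comparison rule, is again a `√gl_n`-crystal. -/
theorem stmt16 {B C : Type*} (n : ℕ) (DB : SqGlData B) (DC : SqGlData C)
    (hB : IsSqGlCrystal n DB) (hC : IsSqGlCrystal n DC) :
    IsSqGlCrystal n (tensorGl DB DC) := by
  obtain ⟨hB1, hB2, hB3⟩ := hB
  obtain ⟨hC1, hC2, hC3⟩ := hC
  refine ⟨?_, ?_, ?_⟩
  · -- string length axiom
    rintro i hi1 hi2 ⟨b, c⟩
    obtain ⟨a, p, ha, hp, hevB, hwB⟩ := hB1 i hi1 hi2 b
    obtain ⟨d, q, hd, hq, hevC, hwC⟩ := hC1 i hi1 hi2 c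
    refine ⟨a - min a q + d, q - min a q + p,
      tensE DB DC i (hC2 i hi1 hi2) (a + d) a d q b c le_rfl ha hd hq,
      tensF DB DC i (hB2 i hi1 hi2) (p + q) a p q b c le_rfl ha hp hq, ?_, ?_⟩
    · obtain ⟨s, hs⟩ := hevB
      obtain ⟨t, ht⟩ := hevC
      exact ⟨s + t - min a q, by omega⟩
    · show (↑(q - min a q + p) : ℤ) - ↑(a - min a q + d) =
        2 * ((↑(DB.wt b i + DC.wt c i) : ℤ) - ↑(DB.wt b (i + 1) + DC.wt c (i + 1)))
      push_cast at hwB hwC ⊢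
      omega
  · -- e/f duality
    rintro i hi1 hi2 ⟨b, c⟩ ⟨b₀, c₀⟩
    constructor
    · intro h
      obtain ⟨a, p, ha, hp, -, -⟩ := hB1 i hi1 hi2 b
      obtain ⟨d, q, hd, hq, -, -⟩ := hC1 i hi1 hi2 c
      rw [tensorGl_e, strLen_eq ha, strLen_eq hq] at h
      split_ifs at h with haq
      · obtain ⟨c', hc', heq⟩ := Option.map_eq_some_iff.mp h
        injection heq with h1 h2; subst h1; subst h2
        have hfc : DC.f i c' = some c := (hC2 i hi1 hi2 c c').mp hc'
        have hq' : HasStringLen (DC.f i) c' (q + 1) := (hsl_shift hfc q).mpr hq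
        rw [tensorGl_f, strLen_eq ha, strLen_eq hq', if_pos (by omega), hfc]
        rfl
      · obtain ⟨b', hb', heq⟩ := Option.map_eq_some_iff.mp h
        injection heq with h1 h2; subst h1; subst h2
        have hfb : DB.f i b' = some b := (hB2 i hi1 hi2 b b').mp hb'
        obtain ⟨a', rfl, ha'⟩ := hsl_pos_exists ha hb'
        rw [tensorGl_f, strLen_eq ha', strLen_eq hq, if_neg (by omega), hfb]
        rfl
    · intro h
      obtain ⟨a, p, ha, hp, -, -⟩ := hB1 i hi1 hi2 b₀
      obtain ⟨d, q, hd, hq, -, -⟩ := hC1 i hi1 hi2 c₀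
      rw [tensorGl_f, strLen_eq ha, strLen_eq hq] at h
      split_ifs at h with haq
      · obtain ⟨c', hc', heq⟩ := Option.map_eq_some_iff.mp h
        injection heq with h1 h2; subst h1; subst h2
        have hec : DC.e i c' = some c₀ := (hC2 i hi1 hi2 c' c₀).mpr hc'
        obtain ⟨q', rfl, hq'⟩ := hsl_pos_exists hq hc'
        rw [tensorGl_e, strLen_eq ha, strLen_eq hq', if_pos (by omega), hec]
        rfl
      · obtain ⟨b', hb', heq⟩ := Option.map_eq_some_iff.mp h
        injection heq with h1 h2; subst h1; subst h2
        have heb : DB.e i b' = some b₀ := (hB2 i hi1 hi2 b' b₀).mpr hb'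
        have ha' : HasStringLen (DB.e i) b' (a + 1) := (hsl_shift heb a).mpr ha
        rw [tensorGl_e, strLen_eq ha', strLen_eq hq, if_neg (by omega), heb]
        rfl
  · -- weight change
    rintro i hi1 hi2 ⟨b, c⟩ ⟨b₀, c₀⟩ h ep hep k
    obtain ⟨a, p, ha, hp, hevB, -⟩ := hB1 i hi1 hi2 b
    obtain ⟨d, q, hd, hq, hevC, -⟩ := hC1 i hi1 hi2 c
    have hlen := tensE DB DC i (hC2 i hi1 hi2) (a + d) a d q b c le_rfl ha hd hq
    have hepval : ep = a - min a q + d := hasStringLen_unique hep hlen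
    rw [tensorGl_e, strLen_eq ha, strLen_eq hq] at h
    split_ifs at h with haq
    · obtain ⟨c', hc', heq⟩ := Option.map_eq_some_iff.mp h
      injection heq with h1 h2; subst h1; subst h2
      have h3 := hC3 i hi1 hi2 c c' hc' d hd k
      have hepd : ep = d := by omega
      rw [hepd]
      show (↑(DB.wt b k + DC.wt c' k) : ℤ) - ↑(DB.wt b k + DC.wt c k) = _
      push_cast
      linarith [h3]
    · obtain ⟨b', hb', heq⟩ := Option.map_eq_some_iff.mp h
      injection heq with h1 h2; subst h1; subst h2
      have h3 := hB3 i hi1 hi2 b b' hb' a ha k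
      have hpar : Even ep ↔ Even a := by
        obtain ⟨t, ht⟩ := hevC
        constructor
        · rintro ⟨s, hs⟩; exact ⟨s + q - t, by omega⟩
        · rintro ⟨u, hu⟩; exact ⟨u + t - q, by omega⟩
      have hLHS : (↑((tensorGl DB DC).wt (b', c) k) : ℤ) -
          ↑((tensorGl DB DC).wt (b, c) k) = ↑(DB.wt b' k) - ↑(DB.wt b k) := by
        show (↑(DB.wt b' k + DC.wt c k) : ℤ) - ↑(DB.wt b k + DC.wt c k) = _
        push_cast
        ring
      by_cases hea : Even a
      · rw [if_pos (hpar.mpr hea)] at *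
        rw [if_pos hea] at h3
        rw [hLHS, h3]
      · rw [if_neg (fun hh => hea (hpar.mp hh))] at *
        rw [if_neg hea] at h3
        rw [hLHS, h3]
end

section
/- For √gl_n-crystals B, C, D, the natural map B ⊗ (C ⊗ D) → (B ⊗ C) ⊗ D sending b ⊗ (c ⊗ d) to (b ⊗ c) ⊗ d is an isomorphism of √gl_n-crystals, i.e. a weight-preserving bijection Φ with Φ(e'_i(x)) = e'_i(Φ(x)) and Φ(f'_i(x)) = f'_i(Φ(x)) for all x and all i ∈ [n−1] (setting Φ(0) = 0); if B, C, D are √q_n-crystals then it is moreover an isomorphism of √q_n-crystals, commuting also with e'_1̄ and f'_1̄. -/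
open scoped Classical

/-! ## Auxiliary lemmas for statement 18 -/

section Stmt18Aux

variable {α : Type*}

lemma iterOpt_one (g : α → Option α) (a : α) : iterOpt g 1 a = g a := by
  cases h : g a <;> simp [iterOpt, h]

lemma iterOpt_succ_of_some (g : α → Option α) {a c : α} (h : g a = some c) (k : ℕ) :
    iterOpt g (k + 1) a = iterOpt g k c := by
  simp [iterOpt, h]

lemma iterOpt_none_succ (g : α → Option α) {k : ℕ} {a : α} (h : iterOpt g k a = none) :
    iterOpt g (k + 1) a = none := by
  induction k generalizing a with
  | zero => simp [iterOpt] at h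
  | succ k ih =>
    cases hg : g a with
    | none => simp [iterOpt, hg]
    | some c =>
      rw [iterOpt_succ_of_some g hg] at h ⊢
      exact ih h

lemma iterOpt_ne_none_mono (g : α → Option α) {j k : ℕ} {a : α} (hjk : j ≤ k)
    (h : iterOpt g k a ≠ none) : iterOpt g j a ≠ none := by
  induction k with
  | zero => exact (Nat.le_zero.mp hjk) ▸ h
  | succ k ih =>
    rcases Nat.lt_or_ge j (k + 1) with hj | hj
    · exact ih (Nat.lt_succ_iff.mp hj) (fun hn => h (iterOpt_none_succ g hn))
    · exact (Nat.le_antisymm hjk hj) ▸ h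

lemma hasStringLen_shift {g : α → Option α} {a c : α} (h : g a = some c) (m : ℕ) :
    HasStringLen g a (m + 1) ↔ HasStringLen g c m := by
  unfold HasStringLen
  rw [iterOpt_succ_of_some g h, iterOpt_succ_of_some g h]

lemma exists_some_of_hs {g : α → Option α} {a : α} {m : ℕ}
    (h : HasStringLen g a (m + 1)) : ∃ c, g a = some c := by
  have h1 : iterOpt g 1 a ≠ none :=
    iterOpt_ne_none_mono g (Nat.succ_le_succ (Nat.zero_le m)) h.1
  rw [iterOpt_one] at h1
  exact Option.ne_none_iff_exists'.mp h1

lemma none_of_hs_zero {g : α → Option α} {a : α} (h : HasStringLen g a 0) :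
    g a = none := by
  have := h.2
  rwa [iterOpt_one] at this

lemma tensorGl_e_def {B C : Type*} (DB : SqGlData B) (DC : SqGlData C) (i : ℕ)
    (b : B) (c : C) :
    (tensorGl DB DC).e i (b, c) =
      if strLen (DB.e i) b ≤ strLen (DC.f i) c then (DC.e i c).map fun c' => (b, c')
      else (DB.e i b).map fun b' => (b', c) := rfl

lemma tensorGl_f_def {B C : Type*} (DB : SqGlData B) (DC : SqGlData C) (i : ℕ)
    (b : B) (c : C) :
    (tensorGl DB DC).f i (b, c) =
      if strLen (DB.e i) b < strLen (DC.f i) c then (DC.f i c).map fun c' => (b, c')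
      else (DB.f i b).map fun b' => (b', c) := rfl

lemma tensorQ_ebar_def {B C : Type*} (DB : SqQData B) (DC : SqQData C) (b : B) (c : C) :
    (tensorQ DB DC).ebar (b, c) =
      if DB.wt b 1 = 0 ∧ DB.wt b 2 = 0 then (DC.ebar c).map fun c' => (b, c')
      else (DB.ebar b).map fun b' => (b', c) := rfl

lemma tensorQ_fbar_def {B C : Type*} (DB : SqQData B) (DC : SqQData C) (b : B) (c : C) :
    (tensorQ DB DC).fbar (b, c) =
      if DB.wt b 1 = 0 ∧ DB.wt b 2 = 0 then (DC.fbar c).map fun c' => (b, c')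
      else (DB.fbar b).map fun b' => (b', c) := rfl

lemma tensorQ_wt_def {B C : Type*} (DB : SqQData B) (DC : SqQData C) (b : B) (c : C)
    (k : ℕ) : (tensorQ DB DC).wt (b, c) k = DB.wt b k + DC.wt c k := rfl

lemma tensor_e_hs {B C : Type*} {n : ℕ} {DB : SqGlData B} {DC : SqGlData C}
    (hB : IsSqGlCrystal n DB) (hC : IsSqGlCrystal n DC)
    {i : ℕ} (h1 : 1 ≤ i) (h2 : i < n) :
    ∀ (N : ℕ) (b : B) (c : C) (eb fb ec fc : ℕ),
      HasStringLen (DB.e i) b eb → HasStringLen (DB.f i) b fb →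
      HasStringLen (DC.e i) c ec → HasStringLen (DC.f i) c fc →
      ec + (eb - fc) = N →
      HasStringLen ((tensorGl DB DC).e i) (b, c) N := by
  intro N
  induction N with
  | zero =>
    intro b c eb fb ec fc heb hfb hec hfc hN
    have hec0 : ec = 0 := by omega
    have hle : eb ≤ fc := by omega
    subst hec0
    constructor
    · simp [iterOpt]
    · rw [zero_add, iterOpt_one, tensorGl_e_def, strLen_eq heb, strLen_eq hfc,
        if_pos hle, none_of_hs_zero hec]
      rfl
  | succ N ih =>
    intro b c eb fb ec fc heb hfb hec hfc hN
    rcases le_or_gt eb fc with hle | hlt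
    · have hec' : ec = N + 1 := by omega
      subst hec'
      obtain ⟨c', hc'⟩ := exists_some_of_hs hec
      have hstep : (tensorGl DB DC).e i (b, c) = some (b, c') := by
        rw [tensorGl_e_def, strLen_eq heb, strLen_eq hfc, if_pos hle, hc']
        rfl
      have hec2 : HasStringLen (DC.e i) c' N := (hasStringLen_shift hc' N).mp hec
      have hfc2 : HasStringLen (DC.f i) c' (fc + 1) :=
        (hasStringLen_shift ((hC.2.1 i h1 h2 c c').mp hc') fc).mpr hfc
      exact (hasStringLen_shift hstep N).mpr
        (ih b c' eb fb N (fc + 1) heb hfb hec2 hfc2 (by omega))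
    · obtain ⟨eb', rfl⟩ : ∃ eb', eb = eb' + 1 := ⟨eb - 1, by omega⟩
      obtain ⟨b', hb'⟩ := exists_some_of_hs heb
      have hstep : (tensorGl DB DC).e i (b, c) = some (b', c) := by
        rw [tensorGl_e_def, strLen_eq heb, strLen_eq hfc, if_neg (by omega), hb']
        rfl
      have heb2 : HasStringLen (DB.e i) b' eb' := (hasStringLen_shift hb' eb').mp heb
      have hfb2 : HasStringLen (DB.f i) b' (fb + 1) :=
        (hasStringLen_shift ((hB.2.1 i h1 h2 b b').mp hb') fb).mpr hfb
      exact (hasStringLen_shift hstep N).mpr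
        (ih b' c eb' (fb + 1) ec fc heb2 hfb2 hec hfc (by omega))

lemma tensor_f_hs {B C : Type*} {n : ℕ} {DB : SqGlData B} {DC : SqGlData C}
    (hB : IsSqGlCrystal n DB) (hC : IsSqGlCrystal n DC)
    {i : ℕ} (h1 : 1 ≤ i) (h2 : i < n) :
    ∀ (M : ℕ) (b : B) (c : C) (eb fb ec fc : ℕ),
      HasStringLen (DB.e i) b eb → HasStringLen (DB.f i) b fb →
      HasStringLen (DC.e i) c ec → HasStringLen (DC.f i) c fc →
      fb + (fc - eb) = M →
      HasStringLen ((tensorGl DB DC).f i) (b, c) M := by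
  intro M
  induction M with
  | zero =>
    intro b c eb fb ec fc heb hfb hec hfc hM
    have hfb0 : fb = 0 := by omega
    subst hfb0
    constructor
    · simp [iterOpt]
    · rw [zero_add, iterOpt_one, tensorGl_f_def, strLen_eq heb, strLen_eq hfc,
        if_neg (by omega), none_of_hs_zero hfb]
      rfl
  | succ M ih =>
    intro b c eb fb ec fc heb hfb hec hfc hM
    rcases Nat.lt_or_ge eb fc with hlt | hge
    · obtain ⟨fc', rfl⟩ : ∃ fc', fc = fc' + 1 := ⟨fc - 1, by omega⟩
      obtain ⟨c', hc'⟩ := exists_some_of_hs hfc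
      have hstep : (tensorGl DB DC).f i (b, c) = some (b, c') := by
        rw [tensorGl_f_def, strLen_eq heb, strLen_eq hfc, if_pos hlt, hc']
        rfl
      have hfc2 : HasStringLen (DC.f i) c' fc' := (hasStringLen_shift hc' fc').mp hfc
      have hec2 : HasStringLen (DC.e i) c' (ec + 1) :=
        (hasStringLen_shift ((hC.2.1 i h1 h2 c' c).mpr hc') ec).mpr hec
      exact (hasStringLen_shift hstep M).mpr
        (ih b c' eb fb (ec + 1) fc' heb hfb hec2 hfc2 (by omega))
    · obtain ⟨fb', rfl⟩ : ∃ fb', fb = fb' + 1 := ⟨fb - 1, by omega⟩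
      obtain ⟨b', hb'⟩ := exists_some_of_hs hfb
      have hstep : (tensorGl DB DC).f i (b, c) = some (b', c) := by
        rw [tensorGl_f_def, strLen_eq heb, strLen_eq hfc, if_neg (by omega), hb']
        rfl
      have hfb2 : HasStringLen (DB.f i) b' fb' := (hasStringLen_shift hb' fb').mp hfb
      have heb2 : HasStringLen (DB.e i) b' (eb + 1) :=
        (hasStringLen_shift ((hB.2.1 i h1 h2 b' b).mpr hb') eb).mpr heb
      exact (hasStringLen_shift hstep M).mpr
        (ih b' c (eb + 1) fb' ec fc heb2 hfb2 hec hfc (by omega))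

lemma glAssoc {B C D : Type*} (n : ℕ) (DB : SqGlData B) (DC : SqGlData C)
    (DD : SqGlData D) (hB : IsSqGlCrystal n DB) (hC : IsSqGlCrystal n DC)
    (hD : IsSqGlCrystal n DD) :
    ∀ i, 1 ≤ i → i < n → ∀ (b : B) (c : C) (d : D),
      ((tensorGl DB (tensorGl DC DD)).e i (b, (c, d))).map
          (fun x : B × (C × D) => ((x.1, x.2.1), x.2.2))
        = (tensorGl (tensorGl DB DC) DD).e i ((b, c), d) ∧
      ((tensorGl DB (tensorGl DC DD)).f i (b, (c, d))).map
          (fun x : B × (C × D) => ((x.1, x.2.1), x.2.2))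
        = (tensorGl (tensorGl DB DC) DD).f i ((b, c), d) := by
  intro i hi1 hi2 b c d
  obtain ⟨eb, fb, heb, hfb, -, -⟩ := hB.1 i hi1 hi2 b
  obtain ⟨ec, fc, hec, hfc, -, -⟩ := hC.1 i hi1 hi2 c
  obtain ⟨ed, fd, hed, hfd, -, -⟩ := hD.1 i hi1 hi2 d
  have hCDe : HasStringLen ((tensorGl DC DD).e i) (c, d) (ed + (ec - fd)) :=
    tensor_e_hs hC hD hi1 hi2 _ c d ec fc ed fd hec hfc hed hfd rfl
  have hCDf : HasStringLen ((tensorGl DC DD).f i) (c, d) (fc + (fd - ec)) :=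
    tensor_f_hs hC hD hi1 hi2 _ c d ec fc ed fd hec hfc hed hfd rfl
  have hBCe : HasStringLen ((tensorGl DB DC).e i) (b, c) (ec + (eb - fc)) :=
    tensor_e_hs hB hC hi1 hi2 _ b c eb fb ec fc heb hfb hec hfc rfl
  have hBCf : HasStringLen ((tensorGl DB DC).f i) (b, c) (fb + (fc - eb)) :=
    tensor_f_hs hB hC hi1 hi2 _ b c eb fb ec fc heb hfb hec hfc rfl
  constructor
  · simp only [tensorGl_e_def, strLen_eq heb, strLen_eq hec, strLen_eq hfc,
      strLen_eq hfd, strLen_eq hCDf, strLen_eq hBCe]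
    split_ifs <;>
      first
        | omega
        | (cases DD.e i d <;> rfl)
        | (cases DC.e i c <;> rfl)
        | (cases DB.e i b <;> rfl)
  · simp only [tensorGl_f_def, strLen_eq heb, strLen_eq hec, strLen_eq hfc,
      strLen_eq hfd, strLen_eq hCDf, strLen_eq hBCe]
    split_ifs <;>
      first
        | omega
        | (cases DD.f i d <;> rfl)
        | (cases DC.f i c <;> rfl)
        | (cases DB.f i b <;> rfl)

lemma qBarAssoc {B C D : Type*} (DB : SqQData B) (DC : SqQData C) (DD : SqQData D)
    (b : B) (c : C) (d : D) :
    ((tensorQ DB (tensorQ DC DD)).ebar (b, (c, d))).map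
        (fun x : B × (C × D) => ((x.1, x.2.1), x.2.2))
      = (tensorQ (tensorQ DB DC) DD).ebar ((b, c), d) ∧
    ((tensorQ DB (tensorQ DC DD)).fbar (b, (c, d))).map
        (fun x : B × (C × D) => ((x.1, x.2.1), x.2.2))
      = (tensorQ (tensorQ DB DC) DD).fbar ((b, c), d) := by
  constructor
  · simp only [tensorQ_ebar_def, tensorQ_wt_def]
    split_ifs <;>
      first
        | omega
        | (cases DD.ebar d <;> rfl)
        | (cases DC.ebar c <;> rfl)
        | (cases DB.ebar b <;> rfl)
  · simp only [tensorQ_fbar_def, tensorQ_wt_def]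
    split_ifs <;>
      first
        | omega
        | (cases DD.fbar d <;> rfl)
        | (cases DC.fbar c <;> rfl)
        | (cases DB.fbar b <;> rfl)

lemma phiBijective {B C D : Type*} :
    Function.Bijective (fun x : B × (C × D) => ((x.1, x.2.1), x.2.2)) := by
  constructor
  · intro x y h
    obtain ⟨x1, x2, x3⟩ := x
    obtain ⟨y1, y2, y3⟩ := y
    simp only [Prod.mk.injEq] at h
    obtain ⟨⟨h1, h2⟩, h3⟩ := h
    subst h1; subst h2; subst h3; rfl
  · exact fun y => ⟨(y.1.1, (y.1.2, y.2)), rfl⟩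

end Stmt18Aux

/-- associativity: the natural map
`B ⊗ (C ⊗ D) → (B ⊗ C) ⊗ D`, `b ⊗ (c ⊗ d) ↦ (b ⊗ c) ⊗ d`, is an isomorphism of
`√gl_n`-crystals, and of `√q_n`-crystals in the queer case. -/
theorem stmt18 {B C D : Type*} (n : ℕ) :
    (∀ (DB : SqGlData B) (DC : SqGlData C) (DD : SqGlData D),
      IsSqGlCrystal n DB → IsSqGlCrystal n DC → IsSqGlCrystal n DD →
      let Φ : B × (C × D) → (B × C) × D := fun x => ((x.1, x.2.1), x.2.2)
      let L := tensorGl DB (tensorGl DC DD)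
      let R := tensorGl (tensorGl DB DC) DD
      Function.Bijective Φ ∧
      (∀ x k, R.wt (Φ x) k = L.wt x k) ∧
      (∀ i, 1 ≤ i → i < n → ∀ x,
        (L.e i x).map Φ = R.e i (Φ x) ∧ (L.f i x).map Φ = R.f i (Φ x))) ∧
    (∀ (DB : SqQData B) (DC : SqQData C) (DD : SqQData D),
      IsSqQnCrystal n DB → IsSqQnCrystal n DC → IsSqQnCrystal n DD →
      let Φ : B × (C × D) → (B × C) × D := fun x => ((x.1, x.2.1), x.2.2)
      let L := tensorQ DB (tensorQ DC DD)
      let R := tensorQ (tensorQ DB DC) DD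
      Function.Bijective Φ ∧
      (∀ x k, L.wt x k = R.wt (Φ x) k) ∧
      (∀ i, 1 ≤ i → i < n → ∀ x,
        (L.e i x).map Φ = R.e i (Φ x) ∧ (L.f i x).map Φ = R.f i (Φ x)) ∧
      (∀ x, (L.ebar x).map Φ = R.ebar (Φ x) ∧ (L.fbar x).map Φ = R.fbar (Φ x))) := by
  constructor
  · intro DB DC DD hB hC hD Φ L R
    refine ⟨phiBijective, ?_, ?_⟩
    · intro x k
      show DB.wt x.1 k + DC.wt x.2.1 k + DD.wt x.2.2 k
        = DB.wt x.1 k + (DC.wt x.2.1 k + DD.wt x.2.2 k)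
      omega
    · intro i hi1 hi2 x
      obtain ⟨b, c, d⟩ := x
      exact glAssoc n DB DC DD hB hC hD i hi1 hi2 b c d
  · intro DB DC DD hB hC hD Φ L R
    refine ⟨phiBijective, ?_, ?_, ?_⟩
    · intro x k
      show DB.wt x.1 k + (DC.wt x.2.1 k + DD.wt x.2.2 k)
        = DB.wt x.1 k + DC.wt x.2.1 k + DD.wt x.2.2 k
      omega
    · intro i hi1 hi2 x
      obtain ⟨b, c, d⟩ := x
      exact glAssoc n DB.toSqGlData DC.toSqGlData DD.toSqGlData
        hB.1 hC.1 hD.1 i hi1 hi2 b c d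
    · intro x
      obtain ⟨b, c, d⟩ := x
      exact qBarAssoc DB DC DD b c d
end
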